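/- Let $F : \mathbb{R}^n \to \mathbb{R}$ be differentiable with $L$-Lipschitz gradient ($L > 0$), $h$ proper convex, $x, v \in \operatorname{dom} h$ with $v \ne x$, and let $G = \langle \nabla F(x), x - v \rangle + h(x) - h(v) > 0$. Define the short stepsize $\alpha = \min\{1, G/(L\|v-x\|^2)\}$ and $x^+ = x + \alpha(v-x)$. Then $F(x^+) + h(x^+) \le F(x) + h(x) - \frac{G}{2}\min\{1, G/(L\|v-x\|^2)\}$. -/

import Mathlib

open RealInnerProductSpace

lemma descent {n : ℕ} (F : EuclideanSpace ℝ (Fin n) → ℝ)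
    (F' : EuclideanSpace ℝ (Fin n) → EuclideanSpace ℝ (Fin n)) (L : ℝ) (hL : 0 < L)
    (hFdiff : ∀ x, HasGradientAt F (F' x) x)
    (hLip : ∀ x y, ‖F' x - F' y‖ ≤ L * ‖x - y‖)
    (x d : EuclideanSpace ℝ (Fin n)) :
    F (x + d) ≤ F x + ⟪F' x, d⟫ + L / 2 * ‖d‖ ^ 2 := by
  set φ : ℝ → ℝ := fun t => F (x + t • d) - t * ⟪F' x, d⟫ - L / 2 * t ^ 2 * ‖d‖ ^ 2 with hφ
  have hderiv : ∀ t : ℝ, HasDerivAt φ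
      (⟪F' (x + t • d), d⟫ - ⟪F' x, d⟫ - L * t * ‖d‖ ^ 2) t := by
    intro t
    have h1 : HasDerivAt (fun t : ℝ => x + t • d) d t := by
      simpa using ((hasDerivAt_id t).smul_const d).const_add x
    have h2 : HasDerivAt (fun t : ℝ => F (x + t • d)) ⟪F' (x + t • d), d⟫ t := by
      have := ((hFdiff (x + t • d)).hasFDerivAt).comp_hasDerivAt t h1
      exact this
    have h3 : HasDerivAt (fun t : ℝ => t * ⟪F' x, d⟫) ⟪F' x, d⟫ t := by
      simpa using (hasDerivAt_id t).mul_const ⟪F' x, d⟫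
    have h4 : HasDerivAt (fun t : ℝ => L / 2 * t ^ 2 * ‖d‖ ^ 2) (L * t * ‖d‖ ^ 2) t := by
      have := (((hasDerivAt_pow 2 t).const_mul (L / 2)).mul_const (‖d‖ ^ 2))
      refine this.congr_deriv ?_
      ring
    exact (h2.sub h3).sub h4
  have key : φ 1 ≤ φ 0 := by
    refine antitoneOn_of_deriv_nonpos (convex_Icc 0 1)
      (fun t _ => (hderiv t).continuousAt.continuousWithinAt)
      (fun t _ => ((hderiv t).differentiableAt).differentiableWithinAt)
      (fun t ht => ?_) (Set.left_mem_Icc.2 zero_le_one)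
      (Set.right_mem_Icc.2 zero_le_one) zero_le_one
    rw [interior_Icc] at ht
    rw [(hderiv t).deriv]
    have hb : ⟪F' (x + t • d) - F' x, d⟫ ≤ L * t * ‖d‖ ^ 2 := by
      calc ⟪F' (x + t • d) - F' x, d⟫ ≤ ‖F' (x + t • d) - F' x‖ * ‖d‖ :=
            real_inner_le_norm _ _
        _ ≤ (L * ‖(x + t • d) - x‖) * ‖d‖ := by
            gcongr; exact hLip _ _
        _ = L * t * ‖d‖ ^ 2 := by
            simp [norm_smul, abs_of_nonneg ht.1.le]; ring
    have : ⟪F' (x + t • d), d⟫ - ⟪F' x, d⟫ = ⟪F' (x + t • d) - F' x, d⟫ := by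
      rw [inner_sub_left]
    linarith
  simp only [hφ, one_smul, zero_smul, add_zero, one_pow] at key
  linarith

/-- one-iteration progress of the conditional gradient method with
the short (adaptive) stepsize on the composite objective `F + h`. -/
theorem stmt16 (n : ℕ) (F : EuclideanSpace ℝ (Fin n) → ℝ)
    (F' : EuclideanSpace ℝ (Fin n) → EuclideanSpace ℝ (Fin n)) (L : ℝ) (hL : 0 < L)
    (hFdiff : ∀ x, HasGradientAt F (F' x) x)
    (hLip : ∀ x y, ‖F' x - F' y‖ ≤ L * ‖x - y‖)
    (s : Set (EuclideanSpace ℝ (Fin n)))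
    (h : EuclideanSpace ℝ (Fin n) → ℝ) (hconv : ConvexOn ℝ s h)
    (x v : EuclideanSpace ℝ (Fin n)) (hx : x ∈ s) (hv : v ∈ s) (hne : v ≠ x)
    (G : ℝ) (hG : G = ⟪F' x, x - v⟫ + h x - h v) (hGpos : 0 < G) :
    F (x + min 1 (G / (L * ‖v - x‖ ^ 2)) • (v - x)) +
        h (x + min 1 (G / (L * ‖v - x‖ ^ 2)) • (v - x)) ≤
      F x + h x - G / 2 * min 1 (G / (L * ‖v - x‖ ^ 2)) := by
  set r2 : ℝ := ‖v - x‖ ^ 2 with hr2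
  have hrpos : 0 < r2 := by
    have : 0 < ‖v - x‖ := norm_sub_pos_iff.2 hne
    positivity
  set α : ℝ := min 1 (G / (L * r2)) with hα
  have hLr : 0 < L * r2 := mul_pos hL hrpos
  have hα0 : 0 ≤ α := le_min zero_le_one (div_nonneg hGpos.le hLr.le)
  have hα1 : α ≤ 1 := min_le_left _ _
  have hαle : α * (L * r2) ≤ G := by
    have h2 : α ≤ G / (L * r2) := min_le_right _ _
    calc α * (L * r2) ≤ G / (L * r2) * (L * r2) := by gcongr
      _ = G := div_mul_cancel₀ _ hLr.ne'
  -- descent part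
  have hF : F (x + α • (v - x)) ≤ F x + α * ⟪F' x, v - x⟫ + L / 2 * α ^ 2 * r2 := by
    have := descent F F' L hL hFdiff hLip x (α • (v - x))
    have hn : ‖α • (v - x)‖ ^ 2 = α ^ 2 * r2 := by
      rw [norm_smul]; simp [abs_of_nonneg hα0, hr2]; ring
    rw [hn] at this
    have hi : ⟪F' x, α • (v - x)⟫ = α * ⟪F' x, v - x⟫ := real_inner_smul_right _ _ _
    rw [hi] at this
    linarith
  -- convexity part
  have hh : h (x + α • (v - x)) ≤ (1 - α) * h x + α * h v := by
    have heq : x + α • (v - x) = (1 - α) • x + α • v := by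
      module
    rw [heq]
    exact hconv.2 hx hv (by linarith) hα0 (by ring)
  have hip : ⟪F' x, v - x⟫ = -(⟪F' x, x - v⟫) := by
    rw [← inner_neg_right]; congr 1; abel
  nlinarith [mul_le_mul_of_nonneg_left hαle hα0, sq_nonneg α]
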